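/- Let A and B be unital C*-algebras and let f : A → B be a bijective linear map with f(1) = 1 such that both f and its inverse f⁻¹ map positive elements to positive elements. Then f maps projections to projections: if p ∈ A satisfies p* = p and p² = p, then f(p)* = f(p) and f(p)² = f(p). -/

import Mathlib

section aux
variable {A : Type*} [CStarAlgebra A] [PartialOrder A] [StarOrderedRing A]

lemma aux_sqrt (p : A) (hp : 0 ≤ p) : ∃ s : A, 0 ≤ s ∧ s * s = p :=
  ⟨CFC.sqrt p, CFC.sqrt_nonneg p, CFC.sqrt_mul_sqrt_self p hp⟩

/-- In a C*-algebra, if `0 ≤ q` and `c` selfadjoint with `c * q * c = 0`, then `q * c = 0`. -/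
lemma aux_qc_zero {q c : A} (hq : 0 ≤ q) (hc : IsSelfAdjoint c)
    (h : c * q * c = 0) : q * c = 0 := by
  obtain ⟨s, hsnn, rfl⟩ := aux_sqrt q hq
  have hsa : IsSelfAdjoint s := IsSelfAdjoint.of_nonneg hsnn
  have key : star (s * c) * (s * c) = 0 := by
    rw [star_mul, hsa.star_eq, hc.star_eq]
    calc c * s * (s * c) = c * (s * s) * c := by noncomm_ring
      _ = 0 := h
  have h0 : s * c = 0 := (CStarRing.star_mul_self_eq_zero_iff _).mp key
  calc s * s * c = s * (s * c) := by noncomm_ring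
    _ = 0 := by rw [h0, mul_zero]

lemma proj_iff (p : A) :
    (star p = p ∧ p * p = p) ↔
      (0 ≤ p ∧ p ≤ 1 ∧ ∀ q, 0 ≤ q → q ≤ p → q ≤ 1 - p → q = 0) := by
  constructor
  · rintro ⟨hsa, hidem⟩
    have hp0 : 0 ≤ p := by
      have : p = star p * p := by rw [hsa, hidem]
      exact this ▸ star_mul_self_nonneg p
    have h1p : 0 ≤ 1 - p := by
      have e : (1 - p) = star (1 - p) * (1 - p) := by
        rw [star_sub, star_one, hsa, mul_sub, mul_one, sub_mul, one_mul, hidem]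
        abel
      exact e ▸ star_mul_self_nonneg (1 - p)
    refine ⟨hp0, sub_nonneg.mp h1p, ?_⟩
    intro q hq hqp hq1p
    have hsa1p : IsSelfAdjoint (1 - p) := (IsSelfAdjoint.one A).sub hsa
    have hsap : IsSelfAdjoint p := hsa
    have h1 : (1 - p) * q * (1 - p) = 0 := by
      have le1 : (1 - p) * q * (1 - p) ≤ (1 - p) * p * (1 - p) :=
        hsa1p.conjugate_le_conjugate hqp
      have e1 : (1 - p) * p * (1 - p) = 0 := by
        have : (1 - p) * p = 0 := by rw [sub_mul, one_mul, hidem, sub_self]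
        rw [this, zero_mul]
      have ge1 : 0 ≤ (1 - p) * q * (1 - p) := by
        simpa [hsa1p.star_eq] using star_left_conjugate_nonneg hq (1 - p)
      exact le_antisymm (e1 ▸ le1) ge1
    have h2 : p * q * p = 0 := by
      have le2 : p * q * p ≤ p * (1 - p) * p := hsap.conjugate_le_conjugate hq1p
      have e2 : p * (1 - p) * p = 0 := by
        rw [mul_sub, mul_one, hidem, sub_self, zero_mul]
      have ge2 : 0 ≤ p * q * p := by
        simpa [hsap.star_eq] using star_left_conjugate_nonneg hq p
      exact le_antisymm (e2 ▸ le2) ge2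
    have hq1 : q * (1 - p) = 0 := aux_qc_zero hq hsa1p h1
    have hq2 : q * p = 0 := aux_qc_zero hq hsap h2
    have : q = q * p := by
      rw [mul_sub, mul_one, sub_eq_zero] at hq1
      exact hq1
    rw [this, hq2]
  · rintro ⟨hp0, hp1, hmin⟩
    obtain ⟨s, hsnn, rfl⟩ := aux_sqrt p hp0
    have hsas : IsSelfAdjoint s := IsSelfAdjoint.of_nonneg hsnn
    have hsap : IsSelfAdjoint (s * s) := by
      rw [IsSelfAdjoint, star_mul, hsas.star_eq]
    refine ⟨hsap.star_eq, ?_⟩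
    have hqe : s * s - s * s * (s * s) = s * (1 - s * s) * s := by noncomm_ring
    have hq0 : 0 ≤ s * s - s * s * (s * s) := by
      rw [hqe]
      simpa [hsas.star_eq] using star_left_conjugate_nonneg (sub_nonneg.mpr hp1) s
    have hqp : s * s - s * s * (s * s) ≤ s * s := by
      have h4 : 0 ≤ s * s * (s * s) := by
        have : s * s * (s * s) = star (s * s) * (s * s) := by rw [hsap.star_eq]
        exact this ▸ star_mul_self_nonneg (s * s)
      exact sub_le_self _ h4
    have hq1p : s * s - s * s * (s * s) ≤ 1 - s * s := by
      have hsa1p : IsSelfAdjoint (1 - s * s) := (IsSelfAdjoint.one A).sub hsap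
      have h5 : 0 ≤ (1 - s * s) * (1 - s * s) := by
        have : (1 - s * s) * (1 - s * s) = star (1 - s * s) * (1 - s * s) := by
          rw [hsa1p.star_eq]
        exact this ▸ star_mul_self_nonneg _
      have key : (1 - s * s) - (s * s - s * s * (s * s)) = (1 - s * s) * (1 - s * s) := by
        noncomm_ring
      exact sub_nonneg.mp (key ▸ h5)
    have h0 := hmin _ hq0 hqp hq1p
    rw [sub_eq_zero] at h0
    exact h0.symm
end aux

theorem stmt_6 {A B : Type*} [CStarAlgebra A] [PartialOrder A] [StarOrderedRing A]
    [CStarAlgebra B] [PartialOrder B] [StarOrderedRing B]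
    (f : A →ₗ[ℂ] B) (hbij : Function.Bijective f) (hone : f 1 = 1)
    (hpos : ∀ a : A, 0 ≤ a → 0 ≤ f a)
    (hpos' : ∀ a : A, 0 ≤ f a → 0 ≤ a)
    (p : A) (hsa : star p = p) (hidem : p * p = p) :
    star (f p) = f p ∧ f p * f p = f p := by
  obtain ⟨hp0, hp1, hmin⟩ := (proj_iff p).mp ⟨hsa, hidem⟩
  refine (proj_iff (f p)).mpr ⟨hpos p hp0, ?_, ?_⟩
  · have := hpos (1 - p) (sub_nonneg.mpr hp1)
    rw [map_sub, hone, sub_nonneg] at this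
    exact this
  · intro q hq hqfp hq1fp
    obtain ⟨a, ha⟩ := hbij.2 q
    have ha0 : 0 ≤ a := hpos' a (ha ▸ hq)
    have hap : a ≤ p := by
      have h1 : 0 ≤ f (p - a) := by rw [map_sub, ha]; exact sub_nonneg.mpr hqfp
      exact sub_nonneg.mp (hpos' _ h1)
    have ha1p : a ≤ 1 - p := by
      have h1 : 0 ≤ f (1 - p - a) := by
        rw [map_sub, map_sub, hone, ha]
        exact sub_nonneg.mpr hq1fp
      exact sub_nonneg.mp (hpos' _ h1)
    rw [← ha, hmin a ha0 hap ha1p, map_zero]
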